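/- Let t ≥ 1 and let s_1 ≤ s_2 ≤ ... ≤ s_t be positive reals with s_t ≤ 2·s_1 and ∑ s_ℓ = S. Then ∑ s_ℓ² ≤ (9/8)·S²/t. -/
import Mathlib


theorem stmt13 (t : ℕ) (ht : 1 ≤ t) (s : Fin t → ℝ)
    (hpos : ∀ i, 0 < s i) (hmono : Monotone s)
    (hbal : s ⟨t - 1, by omega⟩ ≤ 2 * s ⟨0, by omega⟩)
    (S : ℝ) (hS : S = ∑ i, s i) :
    ∑ i, (s i) ^ 2 ≤ 9 / 8 * S ^ 2 / t := by
  set m : ℝ := s ⟨0, by omega⟩ with hm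
  have hmpos : 0 < m := hpos _
  have key : ∀ i, (s i) ^ 2 ≤ 3 * m * s i - 2 * m ^ 2 := by
    intro i
    have h1 : m ≤ s i := hmono (by simp [Fin.le_def])
    have h2 : s i ≤ s ⟨t - 1, by omega⟩ := hmono (by simp [Fin.le_def]; omega)
    nlinarith [h2.trans hbal]
  have hsum : ∑ i, (s i) ^ 2 ≤ 3 * m * S - 2 * m ^ 2 * t := by
    calc ∑ i, (s i) ^ 2 ≤ ∑ i, (3 * m * s i - 2 * m ^ 2) :=
          Finset.sum_le_sum fun i _ => key i
      _ = 3 * m * S - 2 * m ^ 2 * t := by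
          rw [Finset.sum_sub_distrib, ← Finset.mul_sum, hS]
          simp [mul_comm]
  have htpos : (0:ℝ) < t := by exact_mod_cast ht
  rw [le_div_iff₀ htpos]
  nlinarith [sq_nonneg (4 * m * t - 3 * S), hsum, htpos]
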